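/- Gronwall-type energy estimate for the forced linear beam equation: Let L, ρ, μ, T > 0, let f : [0,T]×[0,L] → ℝ be continuous, and let w : [0,T]×[0,L] → ℝ be smooth (C² in t and C⁴ in x, with continuous mixed derivative ∂_t∂²ₓw) satisfying ρ∂²_t w = −μ∂⁴ₓw − f on [0,T]×(0,L), the boundary conditions ∂²ₓw(t,0) = ∂²ₓw(t,L) = ∂³ₓw(t,0) = ∂³ₓw(t,L) = 0 for all t ∈ [0,T], and the zero initial conditions w(0,·) = 0 and ∂_t w(0,·) = 0. Then for every t ∈ [0,T], ∫₀^L (ρ(∂_t w(t,x))² + μ(∂²ₓw(t,x))²)/2 dx ≤ (1/(2ρ)) ∫₀^t ∫₀^L e^{t−s} f(s,x)² dx ds. -/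

import Mathlib

open MeasureTheory Filter Set intervalIntegral Real

-- derivative of the primitive of a continuous function
lemma primHasDeriv {g : ℝ → ℝ} (hg : Continuous g) (y : ℝ) :
    HasDerivAt (fun u => ∫ z in (0:ℝ)..u, g z) (g y) y :=
  intervalIntegral.integral_hasDerivAt_right (hg.intervalIntegrable _ _)
    (hg.stronglyMeasurable.stronglyMeasurableAtFilter) hg.continuousAt

lemma primCont {g : ℝ → ℝ} (hg : Continuous g) :
    Continuous (fun u => ∫ z in (0:ℝ)..u, g z) :=
  continuous_iff_continuousAt.2 fun y => (primHasDeriv hg y).continuousAt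

-- parametric differentiation under the interval integral
lemma paramDeriv {F F' : ℝ → ℝ → ℝ} {t₀ ε C a b : ℝ} (hε : 0 < ε)
    (hFc : ∀ t ∈ Metric.ball t₀ ε, Continuous (F t))
    (hF'c : Continuous (F' t₀))
    (hbd : ∀ x ∈ Set.uIoc a b, ∀ t ∈ Metric.ball t₀ ε, |F' t x| ≤ C)
    (hdiff : ∀ x ∈ Set.uIoc a b, ∀ t ∈ Metric.ball t₀ ε, HasDerivAt (fun τ => F τ x) (F' t x) t) :
    HasDerivAt (fun t => ∫ x in a..b, F t x) (∫ x in a..b, F' t₀ x) t₀ := by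
  have ht₀ : t₀ ∈ Metric.ball t₀ ε := Metric.mem_ball_self hε
  refine (intervalIntegral.hasDerivAt_integral_of_dominated_loc_of_deriv_le
    (bound := fun _ => C) (Metric.ball_mem_nhds t₀ hε) ?_ ?_ ?_ ?_ ?_ ?_).2
  · filter_upwards [Metric.ball_mem_nhds t₀ hε] with t ht
    exact ((hFc t ht).aestronglyMeasurable).restrict
  · exact (hFc t₀ ht₀).intervalIntegrable _ _
  · exact (hF'c.aestronglyMeasurable).restrict
  · exact ae_of_all _ fun x hx t ht => hbd x hx t ht
  · exact intervalIntegrable_const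
  · exact ae_of_all _ fun x hx t ht => hdiff x hx t ht


/-- **Gronwall-type energy estimate for the forced linear beam equation.**
Let `L, ρ, μ, T > 0`, `f` a continuous forcing term, and `w : [0,T] × [0,L] → ℝ` a classical
solution of `ρ ∂ₜ²w = -μ ∂ₓ⁴w - f` with free-end boundary conditions and zero initial data.
Then for every `t ∈ [0,T]`,
`∫₀ᴸ (ρ (∂ₜw(t))² + μ (∂ₓ²w(t))²)/2 dx ≤ (1/(2ρ)) ∫₀ᵗ∫₀ᴸ e^{t-s} f(s,x)² dx ds`. -/
theorem gronwall_energy_estimate_forced_beam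
    (L ρ μ T : ℝ) (hL : 0 < L) (hρ : 0 < ρ) (hμ : 0 < μ) (hT : 0 < T)
    (f : ℝ → ℝ → ℝ) (hf : ContinuousOn (fun p : ℝ × ℝ => f p.1 p.2) (Icc 0 T ×ˢ Icc 0 L))
    (w wt wtt wx wxx wxxx wxxxx wtxx : ℝ → ℝ → ℝ)
    -- time derivatives
    (hwt : ∀ x ∈ Icc 0 L, ∀ t ∈ Icc 0 T, HasDerivAt (fun τ => w τ x) (wt t x) t)
    (hwtt : ∀ x ∈ Icc 0 L, ∀ t ∈ Icc 0 T, HasDerivAt (fun τ => wt τ x) (wtt t x) t)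
    -- space derivatives
    (hwx : ∀ t ∈ Icc 0 T, ∀ x ∈ Icc 0 L, HasDerivAt (fun y => w t y) (wx t x) x)
    (hwxx : ∀ t ∈ Icc 0 T, ∀ x ∈ Icc 0 L, HasDerivAt (fun y => wx t y) (wxx t x) x)
    (hwxxx : ∀ t ∈ Icc 0 T, ∀ x ∈ Icc 0 L, HasDerivAt (fun y => wxx t y) (wxxx t x) x)
    (hwxxxx : ∀ t ∈ Icc 0 T, ∀ x ∈ Icc 0 L, HasDerivAt (fun y => wxxx t y) (wxxxx t x) x)
    -- mixed derivative ∂ₜ∂ₓ²w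
    (hwtxx : ∀ x ∈ Icc 0 L, ∀ t ∈ Icc 0 T, HasDerivAt (fun τ => wxx τ x) (wtxx t x) t)
    -- continuity of the derivatives on [0,T] × [0,L]
    (hcont : ∀ v ∈ ({wt, wtt, wx, wxx, wxxx, wxxxx, wtxx} : Set (ℝ → ℝ → ℝ)),
      ContinuousOn (fun p : ℝ × ℝ => v p.1 p.2) (Icc 0 T ×ˢ Icc 0 L))
    -- the PDE ρ ∂ₜ²w = -μ ∂ₓ⁴w - f on [0,T] × (0,L)
    (hPDE : ∀ t ∈ Icc 0 T, ∀ x ∈ Ioo 0 L,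
      ρ * wtt t x = -μ * wxxxx t x - f t x)
    -- free-end boundary conditions
    (hBC : ∀ t ∈ Icc 0 T,
      wxx t 0 = 0 ∧ wxx t L = 0 ∧ wxxx t 0 = 0 ∧ wxxx t L = 0)
    -- zero initial conditions
    (hw0 : ∀ x ∈ Icc 0 L, w 0 x = 0) (hwt0 : ∀ x ∈ Icc 0 L, wt 0 x = 0) :
    ∀ t ∈ Icc 0 T,
      (∫ x in (0:ℝ)..L, (ρ * (wt t x) ^ 2 + μ * (wxx t x) ^ 2) / 2)
        ≤ (1 / (2 * ρ)) * ∫ s in (0:ℝ)..t, ∫ x in (0:ℝ)..L,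
            Real.exp (t - s) * (f s x) ^ 2 := by
  -- clamping maps
  set cx : ℝ → ℝ := fun x => min L (max 0 x) with hcx_def
  set ct : ℝ → ℝ := fun t => min T (max 0 t) with hct_def
  have hcx_mem : ∀ x, cx x ∈ Icc 0 L := fun x =>
    ⟨le_min hL.le (le_max_left 0 x), min_le_left _ _⟩
  have hcx_eq : ∀ x ∈ Icc 0 L, cx x = x := fun x hx => by
    simp [hcx_def, max_eq_right hx.1, min_eq_right hx.2]
  have hct_mem : ∀ t, ct t ∈ Icc 0 T := fun t =>
    ⟨le_min hT.le (le_max_left 0 t), min_le_left _ _⟩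
  have hct_eq : ∀ t ∈ Icc 0 T, ct t = t := fun t ht => by
    simp [hct_def, max_eq_right ht.1, min_eq_right ht.2]
  -- slice continuity helpers
  have slice : ∀ v : ℝ → ℝ → ℝ,
      ContinuousOn (fun p : ℝ × ℝ => v p.1 p.2) (Icc 0 T ×ˢ Icc 0 L) →
      ∀ t ∈ Icc 0 T, Continuous (fun x => v t (cx x)) := by
    intro v hv t ht
    have hm : Continuous (fun x : ℝ => ((t, cx x) : ℝ × ℝ)) := by fun_prop
    exact hv.comp_continuous hm (fun x => ⟨ht, hcx_mem x⟩)
  have sliceIcc : ∀ v : ℝ → ℝ → ℝ,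
      ContinuousOn (fun p : ℝ × ℝ => v p.1 p.2) (Icc 0 T ×ˢ Icc 0 L) →
      ∀ t ∈ Icc 0 T, ContinuousOn (fun x => v t x) (Icc 0 L) := by
    intro v hv t ht
    exact ((slice v hv t ht).continuousOn).congr fun x hx => by simp only [hcx_eq x hx]
  have joint : ∀ v : ℝ → ℝ → ℝ,
      ContinuousOn (fun p : ℝ × ℝ => v p.1 p.2) (Icc 0 T ×ˢ Icc 0 L) →
      Continuous (fun p : ℝ × ℝ => v (ct p.1) (cx p.2)) := by
    intro v hv
    have hm : Continuous (fun p : ℝ × ℝ => ((ct p.1, cx p.2) : ℝ × ℝ)) := by fun_prop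
    exact hv.comp_continuous hm (fun p => ⟨hct_mem p.1, hcx_mem p.2⟩)
  -- bounds on the compact set
  have boundOf : ∀ v : ℝ → ℝ → ℝ,
      ContinuousOn (fun p : ℝ × ℝ => v p.1 p.2) (Icc 0 T ×ˢ Icc 0 L) →
      ∃ C : ℝ, 0 ≤ C ∧ ∀ t ∈ Icc 0 T, ∀ x ∈ Icc 0 L, |v t x| ≤ C := by
    intro v hv
    obtain ⟨C, hC⟩ := (isCompact_Icc.prod isCompact_Icc).exists_bound_of_continuousOn hv
    refine ⟨C, le_trans (abs_nonneg _)
      (hC (0,0) ⟨⟨le_refl 0, hT.le⟩, ⟨le_refl 0, hL.le⟩⟩), fun t ht x hx => hC (t,x) ⟨ht, hx⟩⟩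
  -- continuity hypotheses on each derivative
  have hcwt := hcont wt (by simp)
  have hcwtt := hcont wtt (by simp)
  have hcwx := hcont wx (by simp)
  have hcwxx := hcont wxx (by simp)
  have hcwxxx := hcont wxxx (by simp)
  have hcwxxxx := hcont wxxxx (by simp)
  have hcwtxx := hcont wtxx (by simp)
  obtain ⟨Cwt, hCwt0, hCwt⟩ := boundOf wt hcwt
  obtain ⟨Cwtt, hCwtt0, hCwtt⟩ := boundOf wtt hcwtt
  obtain ⟨Cwxx, hCwxx0, hCwxx⟩ := boundOf wxx hcwxx
  obtain ⟨Cwtxx, hCwtxx0, hCwtxx⟩ := boundOf wtxx hcwtxx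
  -- fundamental theorem of calculus helper (in space)
  have FTC : ∀ (F F' : ℝ → ℝ), (∀ y ∈ Icc 0 L, HasDerivAt F (F' y) y) →
      ContinuousOn F' (Icc 0 L) →
      ∀ x ∈ Icc 0 L, ∫ y in (0:ℝ)..x, F' y = F x - F 0 := by
    intro F F' hFd hF'c x hx
    have hFc : ContinuousOn F (Icc 0 L) :=
      fun y hy => (hFd y hy).continuousAt.continuousWithinAt
    refine intervalIntegral.integral_eq_sub_of_hasDeriv_right_of_le hx.1
      (hFc.mono (Icc_subset_Icc le_rfl hx.2)) ?_ ?_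
    · intro y hy
      exact (hFd y ⟨hy.1.le, hy.2.le.trans hx.2⟩).hasDerivWithinAt
    · exact (hF'c.mono (by rw [uIcc_of_le hx.1]; exact Icc_subset_Icc le_rfl hx.2)).intervalIntegrable
  -- primitives in space
  set W : ℝ → ℝ → ℝ := fun t y => ∫ z in (0:ℝ)..y, wxx t (cx z) with hW_def
  set V : ℝ → ℝ → ℝ := fun t y => ∫ z in (0:ℝ)..y, wtxx t (cx z) with hV_def
  have hWcont : ∀ t ∈ Icc 0 T, Continuous (W t) := fun t ht => primCont (slice wxx hcwxx t ht)
  have hVcont : ∀ t ∈ Icc 0 T, Continuous (V t) := fun t ht => primCont (slice wtxx hcwtxx t ht)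
  -- master representation  w t x = w t 0 + x * wx t 0 + ∫₀ˣ W t y dy
  have IM : ∀ t ∈ Icc 0 T, ∀ x ∈ Icc 0 L,
      w t x = w t 0 + x * wx t 0 + ∫ y in (0:ℝ)..x, W t y := by
    intro t ht x hx
    have h1 : ∫ y in (0:ℝ)..x, wx t y = w t x - w t 0 :=
      FTC (fun y => w t y) (fun y => wx t y) (hwx t ht) (sliceIcc wx hcwx t ht) x hx
    have h2 : ∀ y ∈ Icc 0 L, wx t y = wx t 0 + W t y := by
      intro y hy
      have h3 : ∫ z in (0:ℝ)..y, wxx t z = wx t y - wx t 0 :=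
        FTC (fun z => wx t z) (fun z => wxx t z) (hwxx t ht) (sliceIcc wxx hcwxx t ht) y hy
      have h4 : W t y = ∫ z in (0:ℝ)..y, wxx t z := by
        refine intervalIntegral.integral_congr fun z hz => ?_
        rw [uIcc_of_le hy.1] at hz
        rw [hcx_eq z ⟨hz.1, hz.2.trans hy.2⟩]
      rw [h4, h3]; ring
    have h5 : ∫ y in (0:ℝ)..x, wx t y = ∫ y in (0:ℝ)..x, (wx t 0 + W t y) := by
      refine intervalIntegral.integral_congr fun y hy => ?_
      rw [uIcc_of_le hx.1] at hy
      exact h2 y ⟨hy.1, hy.2.trans hx.2⟩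
    have h6 : ∫ y in (0:ℝ)..x, (wx t 0 + W t y)
        = x * wx t 0 + ∫ y in (0:ℝ)..x, W t y := by
      rw [intervalIntegral.integral_add intervalIntegrable_const
        ((hWcont t ht).intervalIntegrable _ _), intervalIntegral.integral_const]
      simp [smul_eq_mul, mul_comm]
    have := h1.symm.trans (h5.trans h6)
    linarith
  -- ball inside (0,T)
  have ballIoo : ∀ t₀ ∈ Ioo 0 T, ∃ ε > 0, Metric.ball t₀ ε ⊆ Ioo 0 T := by
    intro t₀ ht₀
    refine ⟨min t₀ (T - t₀), lt_min ht₀.1 (by linarith [ht₀.2]), fun t htb => ?_⟩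
    rw [Metric.mem_ball, Real.dist_eq, abs_lt] at htb
    constructor
    · have := htb.1; have := min_le_left t₀ (T - t₀); linarith
    · have := htb.2; have := min_le_right t₀ (T - t₀); linarith
  have hIooIcc : Ioo (0:ℝ) T ⊆ Icc 0 T := Ioo_subset_Icc_self
  -- time derivative of W is V
  have hWd : ∀ t₀ ∈ Ioo 0 T, ∀ y : ℝ, HasDerivAt (fun t => W t y) (V t₀ y) t₀ := by
    intro t₀ ht₀ y
    obtain ⟨ε, hε, hball⟩ := ballIoo t₀ ht₀
    simp only [hW_def, hV_def]
    refine paramDeriv (F := fun t z => wxx t (cx z)) (F' := fun t z => wtxx t (cx z))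
      (C := Cwtxx) hε ?_ ?_ ?_ ?_
    · exact fun t ht => slice wxx hcwxx t (hIooIcc (hball ht))
    · exact slice wtxx hcwtxx t₀ (hIooIcc ht₀)
    · intro z _ t ht
      exact hCwtxx t (hIooIcc (hball ht)) (cx z) (hcx_mem z)
    · intro z _ t ht
      exact hwtxx (cx z) (hcx_mem z) t (hIooIcc (hball ht))
  -- time derivative of the second primitive
  have hQd : ∀ t₀ ∈ Ioo 0 T, ∀ x ∈ Icc 0 L,
      HasDerivAt (fun t => ∫ y in (0:ℝ)..x, W t y) (∫ y in (0:ℝ)..x, V t₀ y) t₀ := by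
    intro t₀ ht₀ x hx
    obtain ⟨ε, hε, hball⟩ := ballIoo t₀ ht₀
    refine paramDeriv (F := W) (F' := V) (C := Cwtxx * L) hε ?_ ?_ ?_ ?_
    · exact fun t ht => hWcont t (hIooIcc (hball ht))
    · exact hVcont t₀ (hIooIcc ht₀)
    · intro y hy t ht
      rw [uIoc_of_le hx.1] at hy
      have h1 : ∀ z ∈ Set.uIoc (0:ℝ) y, ‖wtxx t (cx z)‖ ≤ Cwtxx :=
        fun z _ => hCwtxx t (hIooIcc (hball ht)) (cx z) (hcx_mem z)
      have h2 := intervalIntegral.norm_integral_le_of_norm_le_const h1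
      have h3 : |y - 0| ≤ L := by
        rw [sub_zero, abs_of_pos hy.1]; exact hy.2.trans hx.2
      calc |V t y| ≤ Cwtxx * |y - 0| := h2
        _ ≤ Cwtxx * L := by nlinarith
    · intro y _ t ht
      exact hWd t (hball ht) y
  -- derivative of t ↦ wx t 0
  set A : ℝ → ℝ := fun t => (wt t L - wt t 0 - ∫ y in (0:ℝ)..L, V t y) / L with hA_def
  have hLmem : L ∈ Icc 0 L := ⟨hL.le, le_rfl⟩
  have h0L : (0:ℝ) ∈ Icc 0 L := ⟨le_rfl, hL.le⟩
  have hwx0d : ∀ t₀ ∈ Ioo 0 T, HasDerivAt (fun t => wx t 0) (A t₀) t₀ := by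
    intro t₀ ht₀
    have hg : HasDerivAt (fun t => (w t L - w t 0 - ∫ y in (0:ℝ)..L, W t y) / L) (A t₀) t₀ :=
      (((hwt L hLmem t₀ (hIooIcc ht₀)).sub (hwt 0 h0L t₀ (hIooIcc ht₀))).sub
        (hQd t₀ ht₀ L hLmem)).div_const L
    refine HasDerivAt.congr_of_eventuallyEq hg ?_
    refine eventuallyEq_of_mem (Ioo_mem_nhds ht₀.1 ht₀.2) fun t ht => ?_
    have := IM t (hIooIcc ht) L hLmem
    field_simp
    linarith
  -- representation of wt
  have hreprt : ∀ t₀ ∈ Ioo 0 T, ∀ x ∈ Icc 0 L,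
      wt t₀ x = wt t₀ 0 + x * A t₀ + ∫ y in (0:ℝ)..x, V t₀ y := by
    intro t₀ ht₀ x hx
    have hg : HasDerivAt (fun t => w t 0 + x * wx t 0 + ∫ y in (0:ℝ)..x, W t y)
        (wt t₀ 0 + x * A t₀ + ∫ y in (0:ℝ)..x, V t₀ y) t₀ :=
      ((hwt 0 h0L t₀ (hIooIcc ht₀)).add ((hwx0d t₀ ht₀).const_mul x)).add (hQd t₀ ht₀ x hx)
    have hg2 : HasDerivAt (fun t => w t x)
        (wt t₀ 0 + x * A t₀ + ∫ y in (0:ℝ)..x, V t₀ y) t₀ := by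
      refine HasDerivAt.congr_of_eventuallyEq hg ?_
      exact eventuallyEq_of_mem (Ioo_mem_nhds ht₀.1 ht₀.2)
        fun t ht => IM t (hIooIcc ht) x hx
    exact (hwt x hx t₀ (hIooIcc ht₀)).unique hg2
  -- spatial derivative of wt
  have hwtd : ∀ t₀ ∈ Ioo 0 T, ∀ x ∈ Ioo 0 L,
      HasDerivAt (fun y => wt t₀ y) (A t₀ + V t₀ x) x := by
    intro t₀ ht₀ x hx
    have hU : HasDerivAt (fun y => wt t₀ 0 + y * A t₀ + ∫ z in (0:ℝ)..y, V t₀ z)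
        (A t₀ + V t₀ x) x := by
      have h1 : HasDerivAt (fun y : ℝ => wt t₀ 0 + y * A t₀) (A t₀) x := by
        simpa using ((hasDerivAt_id x).mul_const (A t₀)).const_add (wt t₀ 0)
      exact h1.add (primHasDeriv (hVcont t₀ (hIooIcc ht₀)) x)
    refine HasDerivAt.congr_of_eventuallyEq hU ?_
    exact eventuallyEq_of_mem (Ioo_mem_nhds hx.1 hx.2)
      fun y hy => hreprt t₀ ht₀ y (Ioo_subset_Icc_self hy)
  -- derivative of A t₀ + V t₀ · is wtxx
  have hVd : ∀ t₀ ∈ Ioo 0 T, ∀ x ∈ Icc 0 L,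
      HasDerivAt (fun y => A t₀ + V t₀ y) (wtxx t₀ x) x := by
    intro t₀ ht₀ x hx
    have := (primHasDeriv (slice wtxx hcwtxx t₀ (hIooIcc ht₀)) x).const_add (A t₀)
    rwa [hcx_eq x hx] at this
  -- integration by parts: ∫ (wxxxx·wt - wxx·wtxx) = 0
  have hIBP : ∀ t₀ ∈ Ioo 0 T,
      ∫ x in (0:ℝ)..L, (wxxxx t₀ x * wt t₀ x - wxx t₀ x * wtxx t₀ x) = 0 := by
    intro t₀ ht₀
    have ht₀' : t₀ ∈ Icc 0 T := hIooIcc ht₀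
    have hPc : ContinuousOn
        (fun x => wxxx t₀ x * wt t₀ x - wxx t₀ x * (A t₀ + V t₀ x)) (Icc 0 L) := by
      refine ((sliceIcc wxxx hcwxxx t₀ ht₀').mul (sliceIcc wt hcwt t₀ ht₀')).sub
        ((sliceIcc wxx hcwxx t₀ ht₀').mul ?_)
      exact (continuous_const.add (hVcont t₀ ht₀')).continuousOn
    have hPd : ∀ x ∈ Ioo 0 L,
        HasDerivAt (fun x => wxxx t₀ x * wt t₀ x - wxx t₀ x * (A t₀ + V t₀ x))
          (wxxxx t₀ x * wt t₀ x - wxx t₀ x * wtxx t₀ x) x := by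
      intro x hx
      have hx' : x ∈ Icc 0 L := Ioo_subset_Icc_self hx
      have h1 := (hwxxxx t₀ ht₀' x hx').mul (hwtd t₀ ht₀ x hx)
      have h2 := (hwxxx t₀ ht₀' x hx').mul (hVd t₀ ht₀ x hx')
      have h3 := h1.sub h2
      exact h3.congr_deriv (by ring)
    have hint : IntervalIntegrable
        (fun x => wxxxx t₀ x * wt t₀ x - wxx t₀ x * wtxx t₀ x) volume 0 L := by
      refine ContinuousOn.intervalIntegrable ?_
      rw [uIcc_of_le hL.le]
      exact ((sliceIcc wxxxx hcwxxxx t₀ ht₀').mul (sliceIcc wt hcwt t₀ ht₀')).sub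
        ((sliceIcc wxx hcwxx t₀ ht₀').mul (sliceIcc wtxx hcwtxx t₀ ht₀'))
    have := intervalIntegral.integral_eq_sub_of_hasDeriv_right_of_le hL.le hPc
      (fun x hx => (hPd x hx).hasDerivWithinAt) hint
    rw [this]
    obtain ⟨hb1, hb2, hb3, hb4⟩ := hBC t₀ ht₀'
    rw [hb1, hb2, hb3, hb4]
    ring
  -- energy, forcing, and derivative candidates
  set EE : ℝ → ℝ := fun t => ∫ x in (0:ℝ)..L,
      (ρ * (wt (ct t) (cx x)) ^ 2 + μ * (wxx (ct t) (cx x)) ^ 2) / 2 with hEE_def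
  set gg : ℝ → ℝ := fun t => (1 / (2 * ρ)) * ∫ x in (0:ℝ)..L, (f (ct t) (cx x)) ^ 2 with hgg_def
  set DD : ℝ → ℝ := fun t => ∫ x in (0:ℝ)..L,
      (ρ * wt t (cx x) * wtt t (cx x) + μ * wxx t (cx x) * wtxx t (cx x)) with hDD_def
  -- continuity of EE and gg
  have hEEc : Continuous EE := by
    rw [hEE_def]
    refine intervalIntegral.continuous_parametric_intervalIntegral_of_continuous'
      (f := fun t x => (ρ * (wt (ct t) (cx x)) ^ 2 + μ * (wxx (ct t) (cx x)) ^ 2) / 2) ?_ _ _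
    have h1 := joint wt hcwt
    have h2 := joint wxx hcwxx
    exact ((continuous_const.mul (h1.pow 2)).add (continuous_const.mul (h2.pow 2))).div_const 2
  have hggc : Continuous gg := by
    rw [hgg_def]
    refine Continuous.mul continuous_const ?_
    refine intervalIntegral.continuous_parametric_intervalIntegral_of_continuous'
      (f := fun t x => (f (ct t) (cx x)) ^ 2) ?_ _ _
    have h1 := joint f hf
    exact h1.pow 2
  -- derivative of the energy
  have hEEd : ∀ t₀ ∈ Ioo 0 T, HasDerivAt EE (DD t₀) t₀ := by
    intro t₀ ht₀
    obtain ⟨ε, hε, hball⟩ := ballIoo t₀ ht₀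
    have key : HasDerivAt (fun t => ∫ x in (0:ℝ)..L,
        (ρ * (wt t (cx x)) ^ 2 + μ * (wxx t (cx x)) ^ 2) / 2) (DD t₀) t₀ := by
      rw [hDD_def]
      refine paramDeriv
        (F := fun t x => (ρ * (wt t (cx x)) ^ 2 + μ * (wxx t (cx x)) ^ 2) / 2)
        (F' := fun t x => ρ * wt t (cx x) * wtt t (cx x) + μ * wxx t (cx x) * wtxx t (cx x))
        (C := ρ * (Cwt * Cwtt) + μ * (Cwxx * Cwtxx)) hε ?_ ?_ ?_ ?_
      · intro t ht
        have h1 := slice wt hcwt t (hIooIcc (hball ht))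
        have h2 := slice wxx hcwxx t (hIooIcc (hball ht))
        exact ((continuous_const.mul (h1.pow 2)).add
          (continuous_const.mul (h2.pow 2))).div_const 2
      · have h1 := slice wt hcwt t₀ (hIooIcc ht₀)
        have h2 := slice wtt hcwtt t₀ (hIooIcc ht₀)
        have h3 := slice wxx hcwxx t₀ (hIooIcc ht₀)
        have h4 := slice wtxx hcwtxx t₀ (hIooIcc ht₀)
        exact ((continuous_const.mul h1).mul h2).add ((continuous_const.mul h3).mul h4)
      · intro x _ t ht
        have htI := hIooIcc (hball ht)
        have b1 := hCwt t htI (cx x) (hcx_mem x)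
        have b2 := hCwtt t htI (cx x) (hcx_mem x)
        have b3 := hCwxx t htI (cx x) (hcx_mem x)
        have b4 := hCwtxx t htI (cx x) (hcx_mem x)
        calc |ρ * wt t (cx x) * wtt t (cx x) + μ * wxx t (cx x) * wtxx t (cx x)|
            ≤ |ρ * wt t (cx x) * wtt t (cx x)| + |μ * wxx t (cx x) * wtxx t (cx x)| :=
              abs_add_le _ _
          _ = ρ * (|wt t (cx x)| * |wtt t (cx x)|) + μ * (|wxx t (cx x)| * |wtxx t (cx x)|) := by
              rw [abs_mul, abs_mul, abs_mul, abs_mul, abs_of_pos hρ, abs_of_pos hμ]; ring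
          _ ≤ ρ * (Cwt * Cwtt) + μ * (Cwxx * Cwtxx) := by
              have m1 : |wt t (cx x)| * |wtt t (cx x)| ≤ Cwt * Cwtt :=
                mul_le_mul b1 b2 (abs_nonneg _) hCwt0
              have m2 : |wxx t (cx x)| * |wtxx t (cx x)| ≤ Cwxx * Cwtxx :=
                mul_le_mul b3 b4 (abs_nonneg _) hCwxx0
              exact add_le_add (mul_le_mul_of_nonneg_left m1 hρ.le)
                (mul_le_mul_of_nonneg_left m2 hμ.le)
      · intro x _ t ht
        have htI := hIooIcc (hball ht)
        have h1 := hwtt (cx x) (hcx_mem x) t htI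
        have h2 := hwtxx (cx x) (hcx_mem x) t htI
        have h3 := (((h1.pow 2).const_mul ρ).add ((h2.pow 2).const_mul μ)).div_const 2
        exact h3.congr_deriv (by push_cast; ring)
    refine HasDerivAt.congr_of_eventuallyEq key ?_
    refine eventuallyEq_of_mem (Ioo_mem_nhds ht₀.1 ht₀.2) fun t ht => ?_
    rw [hEE_def]
    simp only [hct_eq t (hIooIcc ht)]
  -- a.e. avoidance of the endpoint L
  have hne : ∀ᵐ x : ℝ ∂volume, x ≠ L := by
    rw [ae_iff]
    have hset : {x : ℝ | ¬ x ≠ L} = {L} := by ext y; simp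
    rw [hset]
    exact measure_singleton L
  -- key dissipation inequality
  have hDle : ∀ t₀ ∈ Ioo 0 T, DD t₀ ≤ EE t₀ + gg t₀ := by
    intro t₀ ht₀
    have ht' : t₀ ∈ Icc 0 T := hIooIcc ht₀
    have cwt := slice wt hcwt t₀ ht'
    have cwxx := slice wxx hcwxx t₀ ht'
    have cwtxx := slice wtxx hcwtxx t₀ ht'
    have cwxxxx := slice wxxxx hcwxxxx t₀ ht'
    have cf := slice f hf t₀ ht'
    have ha : DD t₀ = ∫ x in (0:ℝ)..L,
        (-μ * (wxxxx t₀ (cx x) * wt t₀ (cx x) - wxx t₀ (cx x) * wtxx t₀ (cx x))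
          - f t₀ (cx x) * wt t₀ (cx x)) := by
      simp only [hDD_def]
      refine intervalIntegral.integral_congr_ae ?_
      filter_upwards [hne] with x hxne hxI
      rw [uIoc_of_le hL.le] at hxI
      have hxIoo : x ∈ Ioo 0 L := ⟨hxI.1, lt_of_le_of_ne hxI.2 hxne⟩
      rw [hcx_eq x (Ioo_subset_Icc_self hxIoo)]
      have hp := hPDE t₀ ht' x hxIoo
      linear_combination wt t₀ x * hp
    have hIBP' : ∫ x in (0:ℝ)..L,
        (wxxxx t₀ (cx x) * wt t₀ (cx x) - wxx t₀ (cx x) * wtxx t₀ (cx x)) = 0 := by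
      refine Eq.trans ?_ (hIBP t₀ ht₀)
      refine intervalIntegral.integral_congr fun x hx => ?_
      rw [uIcc_of_le hL.le] at hx
      rw [hcx_eq x hx]
    have hb : DD t₀ = - ∫ x in (0:ℝ)..L, f t₀ (cx x) * wt t₀ (cx x) := by
      rw [ha, intervalIntegral.integral_sub
        (f := fun x => -μ * (wxxxx t₀ (cx x) * wt t₀ (cx x) - wxx t₀ (cx x) * wtxx t₀ (cx x)))
        (g := fun x => f t₀ (cx x) * wt t₀ (cx x))
        ((continuous_const.mul ((cwxxxx.mul cwt).sub (cwxx.mul cwtxx))).intervalIntegrable _ _)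
        ((cf.mul cwt).intervalIntegrable _ _),
        intervalIntegral.integral_const_mul, hIBP']
      ring
    have hc : - ∫ x in (0:ℝ)..L, f t₀ (cx x) * wt t₀ (cx x)
        ≤ ∫ x in (0:ℝ)..L,
            ((1 / (2 * ρ)) * (f t₀ (cx x)) ^ 2 + ρ * (wt t₀ (cx x)) ^ 2 / 2) := by
      rw [← intervalIntegral.integral_neg]
      refine intervalIntegral.integral_mono_on hL.le
        ((cf.mul cwt).neg.intervalIntegrable _ _)
        (((continuous_const.mul (cf.pow 2)).add
          ((continuous_const.mul (cwt.pow 2)).div_const 2)).intervalIntegrable _ _) ?_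
      intro x _
      set a := f t₀ (cx x); set b := wt t₀ (cx x)
      have key : (1 / (2 * ρ)) * a ^ 2 + ρ * b ^ 2 / 2 - (-(a * b))
          = (1 / (2 * ρ)) * (a + ρ * b) ^ 2 := by
        field_simp
        ring
      have hnn : 0 ≤ (1 / (2 * ρ)) * (a + ρ * b) ^ 2 := by positivity
      linarith
    have hd : ∫ x in (0:ℝ)..L,
        ((1 / (2 * ρ)) * (f t₀ (cx x)) ^ 2 + ρ * (wt t₀ (cx x)) ^ 2 / 2)
        = gg t₀ + ∫ x in (0:ℝ)..L, ρ * (wt t₀ (cx x)) ^ 2 / 2 := by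
      rw [intervalIntegral.integral_add
        (f := fun x => (1 / (2 * ρ)) * (f t₀ (cx x)) ^ 2)
        (g := fun x => ρ * (wt t₀ (cx x)) ^ 2 / 2)
        ((continuous_const.mul (cf.pow 2)).intervalIntegrable _ _)
        (((continuous_const.mul (cwt.pow 2)).div_const 2).intervalIntegrable _ _)]
      simp only [hgg_def]
      rw [hct_eq t₀ ht', intervalIntegral.integral_const_mul]
    have he : ∫ x in (0:ℝ)..L, ρ * (wt t₀ (cx x)) ^ 2 / 2 ≤ EE t₀ := by
      simp only [hEE_def]
      rw [hct_eq t₀ ht']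
      refine intervalIntegral.integral_mono_on hL.le
        (((continuous_const.mul (cwt.pow 2)).div_const 2).intervalIntegrable _ _)
        ((((continuous_const.mul (cwt.pow 2)).add
          (continuous_const.mul (cwxx.pow 2))).div_const 2).intervalIntegrable _ _) ?_
      intro x _
      have := mul_nonneg hμ.le (sq_nonneg (wxx t₀ (cx x)))
      linarith
    linarith [hb, hc, hd.le, he]
  -- Gronwall via monotonicity
  have hexpc : Continuous fun s : ℝ => Real.exp (-s) * gg s :=
    (Real.continuous_exp.comp continuous_neg).mul hggc
  set Φ : ℝ → ℝ := fun τ => Real.exp (-τ) * EE τ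
      - ∫ s in (0:ℝ)..τ, Real.exp (-s) * gg s with hΦ_def
  have hΦc : Continuous Φ :=
    ((Real.continuous_exp.comp continuous_neg).mul hEEc).sub (primCont hexpc)
  have hΦd : ∀ τ ∈ Ioo 0 T,
      HasDerivAt Φ (Real.exp (-τ) * (DD τ - EE τ - gg τ)) τ := by
    intro τ hτ
    have h1 : HasDerivAt (fun τ : ℝ => Real.exp (-τ)) (-Real.exp (-τ)) τ := by
      exact ((Real.hasDerivAt_exp (-τ)).comp τ ((hasDerivAt_id τ).neg)).congr_deriv (by ring)
    have h2 := h1.mul (hEEd τ hτ)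
    have h3 := primHasDeriv hexpc τ
    have h4 := h2.sub h3
    simp only [hΦ_def]
    exact h4.congr_deriv (by ring)
  have hanti : AntitoneOn Φ (Icc 0 T) := by
    refine antitoneOn_of_deriv_nonpos (convex_Icc 0 T) hΦc.continuousOn ?_ ?_
    · intro x hx; rw [interior_Icc] at hx
      exact (hΦd x hx).differentiableAt.differentiableWithinAt
    · intro x hx; rw [interior_Icc] at hx
      rw [(hΦd x hx).deriv]
      have := hDle x hx
      exact mul_nonpos_of_nonneg_of_nonpos (Real.exp_pos (-x)).le (by linarith)
  -- vanishing initial energy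
  have h0T : (0:ℝ) ∈ Icc 0 T := ⟨le_rfl, hT.le⟩
  have hwx00 : ∀ z ∈ Ioo 0 L, wx 0 z = 0 := by
    intro z hz
    have hev : (fun y => w 0 y) =ᶠ[nhds z] fun _ => (0:ℝ) :=
      eventuallyEq_of_mem (Ioo_mem_nhds hz.1 hz.2) fun y hy => hw0 y (Ioo_subset_Icc_self hy)
    exact (hwx 0 h0T z (Ioo_subset_Icc_self hz)).unique
      ((hasDerivAt_const z (0:ℝ)).congr_of_eventuallyEq hev)
  have hwxx00 : ∀ z ∈ Ioo 0 L, wxx 0 z = 0 := by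
    intro z hz
    have hev : (fun y => wx 0 y) =ᶠ[nhds z] fun _ => (0:ℝ) :=
      eventuallyEq_of_mem (Ioo_mem_nhds hz.1 hz.2) fun y hy => hwx00 y hy
    exact (hwxx 0 h0T z (Ioo_subset_Icc_self hz)).unique
      ((hasDerivAt_const z (0:ℝ)).congr_of_eventuallyEq hev)
  have hEE0 : EE 0 = 0 := by
    have hz : (∫ x in (0:ℝ)..L, ((ρ * (wt (ct 0) (cx x)) ^ 2 + μ * (wxx (ct 0) (cx x)) ^ 2) / 2))
        = ∫ _x in (0:ℝ)..L, (0:ℝ) := by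
      refine intervalIntegral.integral_congr_ae ?_
      filter_upwards [hne] with x hxne hxI
      rw [uIoc_of_le hL.le] at hxI
      have hxIoo : x ∈ Ioo 0 L := ⟨hxI.1, lt_of_le_of_ne hxI.2 hxne⟩
      rw [hct_eq 0 h0T, hcx_eq x (Ioo_subset_Icc_self hxIoo),
        hwt0 x (Ioo_subset_Icc_self hxIoo), hwxx00 x hxIoo]
      ring
    simp only [hEE_def]
    rw [hz]
    simp
  -- conclusion
  intro t ht
  have hΦt : Φ t ≤ Φ 0 := hanti ⟨le_rfl, hT.le⟩ ht ht.1
  have hΦ0 : Φ 0 = 0 := by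
    simp only [hΦ_def]
    rw [hEE0]
    simp
  have hkey : Real.exp (-t) * EE t ≤ ∫ s in (0:ℝ)..t, Real.exp (-s) * gg s := by
    rw [hΦ0] at hΦt
    simp only [hΦ_def] at hΦt
    linarith
  have hEEt : EE t ≤ ∫ s in (0:ℝ)..t, Real.exp (t - s) * gg s := by
    calc EE t = Real.exp t * (Real.exp (-t) * EE t) := by
          rw [← mul_assoc, ← Real.exp_add]
          simp
      _ ≤ Real.exp t * ∫ s in (0:ℝ)..t, Real.exp (-s) * gg s :=
          mul_le_mul_of_nonneg_left hkey (Real.exp_pos t).le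
      _ = ∫ s in (0:ℝ)..t, Real.exp (t - s) * gg s := by
          rw [← intervalIntegral.integral_const_mul]
          refine intervalIntegral.integral_congr fun s _ => ?_
          rw [← mul_assoc, ← Real.exp_add, ← sub_eq_add_neg]
  have hLHS : (∫ x in (0:ℝ)..L, (ρ * (wt t x) ^ 2 + μ * (wxx t x) ^ 2) / 2) = EE t := by
    simp only [hEE_def]
    refine intervalIntegral.integral_congr fun x hx => ?_
    rw [uIcc_of_le hL.le] at hx
    rw [hct_eq t ht, hcx_eq x hx]
  have hRHS : (1 / (2 * ρ)) * (∫ s in (0:ℝ)..t, ∫ x in (0:ℝ)..L,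
        Real.exp (t - s) * (f s x) ^ 2)
      = ∫ s in (0:ℝ)..t, Real.exp (t - s) * gg s := by
    rw [← intervalIntegral.integral_const_mul]
    refine intervalIntegral.integral_congr fun s hs => ?_
    rw [uIcc_of_le ht.1] at hs
    have hsT : s ∈ Icc 0 T := ⟨hs.1, hs.2.trans ht.2⟩
    have hin : ∫ x in (0:ℝ)..L, Real.exp (t - s) * (f s x) ^ 2
        = Real.exp (t - s) * ∫ x in (0:ℝ)..L, (f (ct s) (cx x)) ^ 2 := by
      rw [intervalIntegral.integral_const_mul]
      congr 1
      refine intervalIntegral.integral_congr fun x hx => ?_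
      rw [uIcc_of_le hL.le] at hx
      rw [hct_eq s hsT, hcx_eq x hx]
    rw [hin]
    simp only [hgg_def]
    ring
  rw [hLHS, hRHS]
  exact hEEt
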